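/- Let Q⁽¹⁾,…,Q⁽ⁿ⁾ be symmetric tropical Metzler matrices and define the lifted Puiseux matrices by: Q̲⁽ᵏ⁾_ij = −t^{|Q⁽ᵏ⁾_ij|} if Q⁽ᵏ⁾_ij is tropically negative, Q̲⁽ᵏ⁾_ij = m·n·t^{Q⁽ᵏ⁾_ij} if tropically positive, and 0 if −∞. Then for every x in the tropical Metzler spectrahedron S(Q⁽¹⁾,…,Q⁽ⁿ⁾), the monomial lift x̲ with x̲_k = t^{x_k} (and t^{−∞}=0) satisfies, for all i ≠ j: Q̲_ii(x̲) ≥ 0 and Q̲_ii(x̲)·Q̲_jj(x̲) ≥ (m−1)²·(Q̲_ij(x̲))². -/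

import Mathlib

noncomputable section
open scoped Classical

/-- The field of (formal generalized real) Puiseux series, realized as Hahn series
over `ℝ` with exponents in `ℝᵒᵈ`: the support of a series is well-ordered for the
*reversed* order of `ℝ`, so that each nonzero series has a term of greatest real
exponent (its leading term), the exponents being a strictly decreasing (finite or
unbounded) family of reals. -/
abbrev PS : Type := HahnSeries ℝᵒᵈ ℝ

namespace PS

/-- The leading coefficient of a Puiseux series (`0` for the zero series). -/
def lc (x : PS) : ℝ := x.coeff x.order

/-- The valuation of a Puiseux series: its greatest exponent, with `val 0 = ⊥ = -∞`. -/
def val (x : PS) : WithBot ℝ :=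
  if x = 0 then ⊥ else (OrderDual.ofDual x.order : ℝ)

/-- The real-valued valuation (greatest exponent), with junk value `0` at `0`. -/
def valR (x : PS) : ℝ := OrderDual.ofDual x.order

/-- A Puiseux series is nonnegative when its leading coefficient is nonnegative. -/
def Nonneg (x : PS) : Prop := 0 ≤ lc x

/-- A Puiseux series is positive when its leading coefficient is positive. -/
def Pos (x : PS) : Prop := 0 < lc x

/-- The order of the field of Puiseux series: `x ≤ y` iff `y - x` is nonnegative. -/
def le (x y : PS) : Prop := Nonneg (y - x)

/-- The strict order of the field of Puiseux series. -/
def lt (x y : PS) : Prop := Pos (y - x)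

/-- The positive monomial `t^r`. -/
def tpow (r : ℝ) : PS := HahnSeries.single (OrderDual.toDual r) 1

end PS

section Metzler

/- A signed tropical number is encoded by `Option (Bool × ℝ)`: `none` is `-∞`, and
`some (ε, r)` is the signed tropical number of modulus `r`, tropically positive when
`ε = true` and tropically negative when `ε = false`. -/

/-- `e` is a tropically positive entry. -/
def isPos (e : Option (Bool × ℝ)) : Prop := ∃ r : ℝ, e = some (true, r)

/-- `e` is a tropically negative entry. -/
def isNeg (e : Option (Bool × ℝ)) : Prop := ∃ r : ℝ, e = some (false, r)

/-- The modulus of a signed tropical number, in `ℝ ∪ {-∞}`. -/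
def tmod (e : Option (Bool × ℝ)) : WithBot ℝ := e.elim ⊥ (fun p => (p.2 : WithBot ℝ))

/-- The Puiseux lift of a matrix entry: `-t^r` for a tropically negative entry `⊖r`,
`coef * t^r` for a tropically positive entry `r` (where `coef = m·n`), and `0`
for `-∞`. -/
def entLift (coef : ℝ) (e : Option (Bool × ℝ)) : PS :=
  e.elim 0 (fun p =>
    if p.1 then HahnSeries.single (OrderDual.toDual p.2) coef
    else HahnSeries.single (OrderDual.toDual p.2) (-1))

/-- The monomial lift of a tropical point: `t^r` lifts `r`, and `0` lifts `-∞`. -/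
def liftPt (v : WithBot ℝ) : PS := WithBot.recBotCoe 0 (fun r => PS.tpow r) v

variable {m n : ℕ} (Q : Fin n → Fin m → Fin m → Option (Bool × ℝ))

/-- The `(i,j)` entry of the lifted matrix pencil `x̲₁Q̲⁽¹⁾ + ⋯ + x̲_n Q̲⁽ⁿ⁾`
evaluated at the monomial lift `x̲` of the tropical point `x`. -/
def pencil (x : Fin n → WithBot ℝ) (i j : Fin m) : PS :=
  ∑ k, liftPt (x k) * entLift ((m : ℝ) * n) (Q k i j)

/-- `max` over the tropically positive diagonal coefficients `Q⁽ᵏ⁾ᵢᵢ` of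
`Q⁽ᵏ⁾ᵢᵢ + x_k`. -/
def dPlus (x : Fin n → WithBot ℝ) (i : Fin m) : WithBot ℝ :=
  (Finset.univ.filter (fun k => isPos (Q k i i))).sup (fun k => tmod (Q k i i) + x k)

/-- `max` over the tropically negative diagonal coefficients `Q⁽ᵏ⁾ᵢᵢ` of
`|Q⁽ᵏ⁾ᵢᵢ| + x_k`. -/
def dMinus (x : Fin n → WithBot ℝ) (i : Fin m) : WithBot ℝ :=
  (Finset.univ.filter (fun k => isNeg (Q k i i))).sup (fun k => tmod (Q k i i) + x k)

/-- `max_k (|Q⁽ᵏ⁾ᵢⱼ| + x_k)`. -/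
def offAbs (x : Fin n → WithBot ℝ) (i j : Fin m) : WithBot ℝ :=
  Finset.univ.sup (fun k => tmod (Q k i j) + x k)

/-- Membership in the tropical Metzler spectrahedron `S(Q⁽¹⁾, …, Q⁽ⁿ⁾)`. -/
def memTropSpectra (x : Fin n → WithBot ℝ) : Prop :=
  (∀ i, dMinus Q x i ≤ dPlus Q x i) ∧
    ∀ i j : Fin m, i < j → 2 • offAbs Q x i j ≤ dPlus Q x i + dPlus Q x j

end Metzler


namespace MAux

open OrderDual

lemma eq_zero_of_coeff (f : PS) (h : ∀ E : ℝ, f.coeff (toDual E) = 0) : f = 0 := by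
  apply HahnSeries.coeff_injective
  funext g
  exact h (ofDual g)

lemma pos_of (f : PS) (E : ℝ) (h1 : 0 < f.coeff (toDual E))
    (h2 : ∀ E' : ℝ, E < E' → f.coeff (toDual E') = 0) : PS.Pos f := by
  have hf : f ≠ 0 := by
    intro h; rw [h] at h1; simp at h1
  have h3 : f.order ≤ toDual E := HahnSeries.order_le_of_coeff_ne_zero h1.ne'
  have hord : f.order = toDual E := by
    rcases lt_or_eq_of_le h3 with h4 | h4
    · have h5 : E < ofDual f.order := toDual_lt_toDual.mp h4
      exact absurd (h2 _ h5) (mt HahnSeries.coeff_order_eq_zero.mp hf)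
    · exact h4
  unfold PS.Pos PS.lc
  rw [hord]; exact h1

lemma nonneg_of_pos {f : PS} (h : PS.Pos f) : PS.Nonneg f := le_of_lt h

lemma nonneg_zero : PS.Nonneg (0 : PS) := by
  unfold PS.Nonneg PS.lc; simp

/-- `VLE f d` : all coefficients of `f` at exponents `> d` vanish. -/
def VLE (f : PS) (d : WithBot ℝ) : Prop :=
  ∀ E : ℝ, d < (E : WithBot ℝ) → f.coeff (toDual E) = 0

lemma VLE.mono {f : PS} {d d' : WithBot ℝ} (h : VLE f d) (hd : d ≤ d') : VLE f d' :=
  fun E hE => h E (lt_of_le_of_lt hd hE)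

lemma VLE.le_of_ne {f : PS} {d : WithBot ℝ} (h : VLE f d) {a : ℝᵒᵈ}
    (ha : f.coeff a ≠ 0) : ((ofDual a : ℝ) : WithBot ℝ) ≤ d := by
  by_contra hc
  push_neg at hc
  exact ha (h (ofDual a) hc)

lemma VLE.mul {f g : PS} {d d' : WithBot ℝ} (hf : VLE f d) (hg : VLE g d') :
    VLE (f * g) (d + d') := by
  intro E hE
  rw [HahnSeries.coeff_mul]
  apply Finset.sum_eq_zero
  intro ij hij
  rw [Finset.mem_addAntidiagonal] at hij
  obtain ⟨hm1, hm2, hm3⟩ := hij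
  have e1 : ((ofDual ij.1 : ℝ) : WithBot ℝ) ≤ d := hf.le_of_ne hm1
  have e2 : ((ofDual ij.2 : ℝ) : WithBot ℝ) ≤ d' := hg.le_of_ne hm2
  have e3 : ofDual ij.1 + ofDual ij.2 = E := congrArg ofDual hm3
  have e4 : ((E : ℝ) : WithBot ℝ) ≤ d + d' := by
    rw [← e3, WithBot.coe_add]
    exact add_le_add e1 e2
  exact absurd e4 (not_le_of_gt hE)

lemma coeff_mul_of_vle {f g : PS} {d d' : ℝ} (hf : VLE f (d : WithBot ℝ))
    (hg : VLE g (d' : WithBot ℝ)) :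
    (f * g).coeff (toDual (d + d')) = f.coeff (toDual d) * g.coeff (toDual d') := by
  rw [HahnSeries.coeff_mul]
  apply Finset.sum_eq_single (toDual d, toDual d')
  · intro ij hij hne
    rw [Finset.mem_addAntidiagonal] at hij
    obtain ⟨hm1, hm2, hm3⟩ := hij
    have e1 : (ofDual ij.1 : ℝ) ≤ d := WithBot.coe_le_coe.mp (hf.le_of_ne hm1)
    have e2 : (ofDual ij.2 : ℝ) ≤ d' := WithBot.coe_le_coe.mp (hg.le_of_ne hm2)
    have e3 : ofDual ij.1 + ofDual ij.2 = d + d' := congrArg ofDual hm3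
    have e4 : ij.1 = toDual d := by
      have h : (ofDual ij.1 : ℝ) = d := by linarith
      exact congrArg toDual h
    have e5 : ij.2 = toDual d' := by
      have h : (ofDual ij.2 : ℝ) = d' := by linarith
      exact congrArg toDual h
    exact absurd (Prod.ext e4 e5) hne
  · intro hmem
    by_contra hne
    apply hmem
    rw [Finset.mem_addAntidiagonal]
    rcases mul_ne_zero_iff.mp hne with ⟨hne1, hne2⟩
    exact ⟨HahnSeries.mem_support _ _ |>.mpr hne1, HahnSeries.mem_support _ _ |>.mpr hne2, rfl⟩

lemma sum_coeff {ι : Type*} (s : Finset ι) (f : ι → PS) (a : ℝᵒᵈ) :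
    (∑ k ∈ s, f k).coeff a = ∑ k ∈ s, (f k).coeff a := by
  classical
  induction s using Finset.induction with
  | empty => simp
  | insert _ _ h ih => rw [Finset.sum_insert h, Finset.sum_insert h, HahnSeries.coeff_add, ih]

/-- The signed coefficient of a lifted entry. -/
def sg (c : ℝ) (e : Option (Bool × ℝ)) : ℝ := e.elim 0 (fun p => if p.1 then c else -1)

lemma coeff_term (c : ℝ) (v : WithBot ℝ) (e : Option (Bool × ℝ)) (E : ℝ) :
    (liftPt v * entLift c e).coeff (toDual E) =
      if tmod e + v = (E : WithBot ℝ) then sg c e else 0 := by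
  cases v with
  | bot =>
    have h : tmod e + (⊥ : WithBot ℝ) = ⊥ := by simp
    have h2 : liftPt (⊥ : WithBot ℝ) = 0 := rfl
    rw [h2, zero_mul, HahnSeries.coeff_zero, h, if_neg (by simp)]
  | coe r =>
    cases e with
    | none =>
      have h2 : entLift c none = 0 := rfl
      rw [h2, mul_zero, HahnSeries.coeff_zero]
      have h : tmod none + ((r : ℝ) : WithBot ℝ) = ⊥ := by simp [tmod]
      rw [h, if_neg (by simp)]
    | some p =>
      obtain ⟨b, s⟩ := p
      have hlift : liftPt ((r : ℝ) : WithBot ℝ) = HahnSeries.single (toDual r) 1 := rfl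
      have hiff : (toDual E = toDual (r + s)) ↔
          (tmod (some (b, s)) + ((r : ℝ) : WithBot ℝ) = (E : WithBot ℝ)) := by
        rw [toDual_inj]
        show _ ↔ ((s : WithBot ℝ) + (r : WithBot ℝ) = (E : WithBot ℝ))
        rw [← WithBot.coe_add, WithBot.coe_eq_coe]
        constructor <;> (intro h; linarith)
      cases b with
      | true =>
        have hent : entLift c (some (true, s)) = HahnSeries.single (toDual s) c := rfl
        rw [hlift, hent, HahnSeries.single_mul_single, one_mul, HahnSeries.coeff_single]
        have hadd : toDual r + toDual s = toDual (r + s) := rfl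
        rw [hadd]
        by_cases h : tmod (some (true, s)) + ((r : ℝ) : WithBot ℝ) = (E : WithBot ℝ)
        · rw [if_pos h, if_pos (hiff.mpr h)]
          simp [sg]
        · rw [if_neg h, if_neg (fun hc => h (hiff.mp hc))]
      | false =>
        have hent : entLift c (some (false, s)) = HahnSeries.single (toDual s) (-1) := rfl
        rw [hlift, hent, HahnSeries.single_mul_single, one_mul, HahnSeries.coeff_single]
        have hadd : toDual r + toDual s = toDual (r + s) := rfl
        rw [hadd]
        by_cases h : tmod (some (false, s)) + ((r : ℝ) : WithBot ℝ) = (E : WithBot ℝ)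
        · rw [if_pos h, if_pos (hiff.mpr h)]
          simp [sg]
        · rw [if_neg h, if_neg (fun hc => h (hiff.mp hc))]

variable {m n : ℕ}

lemma coeff_pencil (Q : Fin n → Fin m → Fin m → Option (Bool × ℝ)) (x : Fin n → WithBot ℝ)
    (i j : Fin m) (E : ℝ) :
    (pencil Q x i j).coeff (toDual E) =
      ∑ k, if tmod (Q k i j) + x k = (E : WithBot ℝ) then sg ((m : ℝ) * n) (Q k i j) else 0 := by
  unfold pencil
  rw [sum_coeff]
  exact Finset.sum_congr rfl fun k _ => coeff_term _ _ _ _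

lemma vle_pencil_diag (Q : Fin n → Fin m → Fin m → Option (Bool × ℝ)) (x : Fin n → WithBot ℝ)
    (i : Fin m) (hmem : dMinus Q x i ≤ dPlus Q x i) :
    VLE (pencil Q x i i) (dPlus Q x i) := by
  intro E hE
  rw [coeff_pencil]
  apply Finset.sum_eq_zero
  intro k _
  rw [if_neg]
  intro hc
  match hq : Q k i i with
  | none =>
    rw [hq] at hc
    simp [tmod] at hc
  | some (true, s) =>
    have hk : k ∈ Finset.univ.filter (fun k => isPos (Q k i i)) := by
      rw [Finset.mem_filter]
      exact ⟨Finset.mem_univ k, ⟨s, hq⟩⟩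
    have hle : tmod (Q k i i) + x k ≤ dPlus Q x i :=
      Finset.le_sup (f := fun k => tmod (Q k i i) + x k) hk
    rw [hc] at hle
    exact absurd hle (not_le_of_gt hE)
  | some (false, s) =>
    have hk : k ∈ Finset.univ.filter (fun k => isNeg (Q k i i)) := by
      rw [Finset.mem_filter]
      exact ⟨Finset.mem_univ k, ⟨s, hq⟩⟩
    have hle : tmod (Q k i i) + x k ≤ dMinus Q x i :=
      Finset.le_sup (f := fun k => tmod (Q k i i) + x k) hk
    have hle2 := le_trans hle hmem
    rw [hc] at hle2
    exact absurd hle2 (not_le_of_gt hE)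

lemma vle_pencil_off (Q : Fin n → Fin m → Fin m → Option (Bool × ℝ)) (x : Fin n → WithBot ℝ)
    (i j : Fin m) : VLE (pencil Q x i j) (offAbs Q x i j) := by
  intro E hE
  rw [coeff_pencil]
  apply Finset.sum_eq_zero
  intro k _
  rw [if_neg]
  intro hc
  have hle : tmod (Q k i j) + x k ≤ offAbs Q x i j :=
    Finset.le_sup (f := fun k => tmod (Q k i j) + x k) (Finset.mem_univ k)
  rw [hc] at hle
  exact absurd hle (not_le_of_gt hE)

lemma coeff_off_bound (Q : Fin n → Fin m → Fin m → Option (Bool × ℝ))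
    (hmetzler : ∀ k i j, i ≠ j → ¬ isPos (Q k i j)) (x : Fin n → WithBot ℝ)
    (i j : Fin m) (hij : i ≠ j) (E : ℝ) :
    -(n : ℝ) ≤ (pencil Q x i j).coeff (toDual E) ∧ (pencil Q x i j).coeff (toDual E) ≤ 0 := by
  rw [coeff_pencil]
  have hterm : ∀ k : Fin n,
      (-1 : ℝ) ≤ (if tmod (Q k i j) + x k = (E : WithBot ℝ) then sg ((m : ℝ) * n) (Q k i j) else 0) ∧
      (if tmod (Q k i j) + x k = (E : WithBot ℝ) then sg ((m : ℝ) * n) (Q k i j) else 0) ≤ 0 := by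
    intro k
    by_cases h : tmod (Q k i j) + x k = (E : WithBot ℝ)
    · rw [if_pos h]
      match hq : Q k i j with
      | none => simp [sg]
      | some (b, s) =>
        have hb : b = false := by
          cases b
          · rfl
          · exact absurd ⟨s, hq⟩ (hmetzler k i j hij)
        subst hb
        simp [sg]
    · rw [if_neg h]
      norm_num
  constructor
  · calc -(n : ℝ) = ∑ _k : Fin n, (-1 : ℝ) := by simp
      _ ≤ _ := Finset.sum_le_sum fun k _ => (hterm k).1
  · calc _ ≤ ∑ _k : Fin n, (0 : ℝ) := Finset.sum_le_sum fun k _ => (hterm k).2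
      _ = 0 := by simp

lemma coeff_diag_lb (Q : Fin n → Fin m → Fin m → Option (Bool × ℝ)) (x : Fin n → WithBot ℝ)
    (i : Fin m) (d : ℝ) (hd : dPlus Q x i = (d : WithBot ℝ)) :
    (m : ℝ) * n - ((n : ℝ) - 1) ≤ (pencil Q x i i).coeff (toDual d) := by
  have hne : (Finset.univ.filter (fun k => isPos (Q k i i))).Nonempty := by
    by_contra h
    rw [Finset.not_nonempty_iff_eq_empty] at h
    rw [dPlus, h, Finset.sup_empty] at hd
    exact absurd hd.symm (WithBot.coe_ne_bot)
  obtain ⟨k₀, hk₀mem, hk₀⟩ :=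
    Finset.exists_mem_eq_sup _ hne (fun k => tmod (Q k i i) + x k)
  rw [Finset.mem_filter] at hk₀mem
  obtain ⟨s, hq⟩ := hk₀mem.2
  have hval : tmod (Q k₀ i i) + x k₀ = (d : WithBot ℝ) := by
    rw [← hk₀]
    exact hd.symm ▸ rfl
  have hn1 : 1 ≤ n := k₀.pos
  rw [coeff_pencil]
  rw [← Finset.add_sum_erase _ _ (Finset.mem_univ k₀)]
  have h1 : (if tmod (Q k₀ i i) + x k₀ = (d : WithBot ℝ) then sg ((m : ℝ) * n) (Q k₀ i i) else 0)
      = (m : ℝ) * n := by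
    rw [if_pos hval, hq]
    simp [sg]
  rw [h1]
  have h2 : -((n : ℝ) - 1) ≤
      ∑ k ∈ Finset.univ.erase k₀,
        (if tmod (Q k i i) + x k = (d : WithBot ℝ) then sg ((m : ℝ) * n) (Q k i i) else 0) := by
    have hterm : ∀ k ∈ Finset.univ.erase k₀, (-1 : ℝ) ≤
        (if tmod (Q k i i) + x k = (d : WithBot ℝ) then sg ((m : ℝ) * n) (Q k i i) else 0) := by
      intro k _
      by_cases h : tmod (Q k i i) + x k = (d : WithBot ℝ)
      · rw [if_pos h]
        match Q k i i with
        | none => simp [sg]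
        | some (true, s') =>
          have h0 : (0 : ℝ) ≤ (m : ℝ) * n := by positivity
          simp only [sg, Option.elim]
          simp only [if_true]
          linarith
        | some (false, s') => simp [sg]
      · rw [if_neg h]; norm_num
    have hcard : ((Finset.univ.erase k₀).card : ℝ) = (n : ℝ) - 1 := by
      rw [Finset.card_erase_of_mem (Finset.mem_univ k₀), Finset.card_univ, Fintype.card_fin]
      push_cast [Nat.cast_sub hn1]
      ring
    calc -((n : ℝ) - 1) = ∑ _k ∈ Finset.univ.erase k₀, (-1 : ℝ) := by
          rw [Finset.sum_const, nsmul_eq_mul, hcard]; ring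
      _ ≤ _ := Finset.sum_le_sum hterm
  linarith

lemma pencil_symm (Q : Fin n → Fin m → Fin m → Option (Bool × ℝ))
    (hsym : ∀ k i j, Q k i j = Q k j i) (x : Fin n → WithBot ℝ) (i j : Fin m) :
    pencil Q x i j = pencil Q x j i := by
  unfold pencil
  exact Finset.sum_congr rfl fun k _ => by rw [hsym k i j]

lemma offAbs_symm (Q : Fin n → Fin m → Fin m → Option (Bool × ℝ))
    (hsym : ∀ k i j, Q k i j = Q k j i) (x : Fin n → WithBot ℝ) (i j : Fin m) :
    offAbs Q x i j = offAbs Q x j i := by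
  unfold offAbs
  exact Finset.sup_congr rfl fun k _ => by rw [hsym k i j]

end MAux

/-- Let `Q⁽¹⁾, …, Q⁽ⁿ⁾` be symmetric tropical Metzler matrices, and
lift them to Puiseux matrices `Q̲⁽ᵏ⁾` by sending a tropically negative entry `⊖r` to
`-t^r`, a tropically positive entry `r` to `m·n·t^r` and `-∞` to `0`.  Then for every
point `x` of the tropical Metzler spectrahedron `S(Q⁽¹⁾, …, Q⁽ⁿ⁾)`, the monomial lift
`x̲` (with `x̲_k = t^{x_k}`, `t^{-∞} = 0`) satisfies, for all `i ≠ j`: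
`Q̲ᵢᵢ(x̲) ≥ 0` and `Q̲ᵢᵢ(x̲)·Q̲ⱼⱼ(x̲) ≥ (m-1)²·(Q̲ᵢⱼ(x̲))²`. -/
theorem metzler_lift_diagonally_dominant {m n : ℕ}
    (Q : Fin n → Fin m → Fin m → Option (Bool × ℝ))
    (hsym : ∀ k i j, Q k i j = Q k j i)
    (hmetzler : ∀ k i j, i ≠ j → ¬ isPos (Q k i j))
    (x : Fin n → WithBot ℝ) (hx : memTropSpectra Q x) :
    ∀ i j : Fin m, i ≠ j →
      PS.le 0 (pencil Q x i i) ∧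
      PS.le (((m : PS) - 1) ^ 2 * (pencil Q x i j) ^ 2)
        (pencil Q x i i * pencil Q x j j) := by
  intro i j hij
  obtain ⟨h1, h2⟩ := hx
  have hvi := MAux.vle_pencil_diag Q x i (h1 i)
  have hvj := MAux.vle_pencil_diag Q x j (h1 j)
  have hvo := MAux.vle_pencil_off Q x i j
  have hm1 : (1 : ℝ) ≤ (m : ℝ) := by exact_mod_cast i.pos
  have hn0 : (0 : ℝ) ≤ (n : ℝ) := Nat.cast_nonneg n
  have hmn : (0 : ℝ) ≤ ((m : ℝ) - 1) * (n : ℝ) := mul_nonneg (by linarith) hn0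
  have hoff2 : offAbs Q x i j + offAbs Q x i j ≤ dPlus Q x i + dPlus Q x j := by
    have hoff : 2 • offAbs Q x i j ≤ dPlus Q x i + dPlus Q x j := by
      rcases lt_or_gt_of_ne hij with h | h
      · exact h2 i j h
      · have h3 := h2 j i h
        rw [MAux.offAbs_symm Q hsym x j i] at h3
        exact h3.trans_eq (add_comm _ _)
    rwa [two_nsmul] at hoff
  have hC : ((m : PS) - 1) ^ 2
      = HahnSeries.single (OrderDual.toDual (0 : ℝ)) (((m : ℝ) - 1) ^ 2) := by
    have h : HahnSeries.C (((m : ℝ) - 1) ^ 2) = ((m : PS) - 1) ^ 2 := by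
      rw [map_pow, map_sub, map_natCast, map_one]
    rw [← h, HahnSeries.C_apply]
    rfl
  have hCvle : MAux.VLE (((m : PS) - 1) ^ 2) (((0 : ℝ) : WithBot ℝ)) := by
    intro E hE
    have hE' : (0 : ℝ) < E := WithBot.coe_lt_coe.mp hE
    rw [hC]
    exact HahnSeries.coeff_single_of_ne
      (fun hEq => hE'.ne' (OrderDual.toDual_inj.mp hEq))
  have hCcoeff : (((m : PS) - 1) ^ 2).coeff (OrderDual.toDual (0 : ℝ))
      = ((m : ℝ) - 1) ^ 2 := by
    rw [hC, HahnSeries.coeff_single_same]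
  constructor
  · show PS.Nonneg (pencil Q x i i - 0)
    rw [sub_zero]
    cases hdp : dPlus Q x i with
    | bot =>
      have hz : pencil Q x i i = 0 :=
        MAux.eq_zero_of_coeff _ (fun E => hvi E (by rw [hdp]; exact WithBot.bot_lt_coe E))
      rw [hz]; exact MAux.nonneg_zero
    | coe d =>
      apply MAux.nonneg_of_pos
      apply MAux.pos_of _ d
      · have hlb := MAux.coeff_diag_lb Q x i d hdp
        nlinarith
      · intro E' hE'
        exact hvi E' (by rw [hdp]; exact_mod_cast WithBot.coe_lt_coe.mpr hE')
  · show PS.Nonneg (pencil Q x i i * pencil Q x j j - ((m : PS) - 1) ^ 2 * pencil Q x i j ^ 2)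
    by_cases hdi : dPlus Q x i = ⊥
    · have hzi : pencil Q x i i = 0 :=
        MAux.eq_zero_of_coeff _ (fun E => hvi E (by rw [hdi]; exact WithBot.bot_lt_coe E))
      have hob : offAbs Q x i j = ⊥ := by
        rw [hdi, WithBot.bot_add] at hoff2
        rcases WithBot.add_eq_bot.mp (le_bot_iff.mp hoff2) with h | h <;> exact h
      have hzo : pencil Q x i j = 0 :=
        MAux.eq_zero_of_coeff _ (fun E => hvo E (by rw [hob]; exact WithBot.bot_lt_coe E))
      rw [hzi, hzo]
      have h0 : (0 : PS) * pencil Q x j j - ((m : PS) - 1) ^ 2 * (0 : PS) ^ 2 = 0 := by ring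
      rw [h0]; exact MAux.nonneg_zero
    by_cases hdj : dPlus Q x j = ⊥
    · have hzj : pencil Q x j j = 0 :=
        MAux.eq_zero_of_coeff _ (fun E => hvj E (by rw [hdj]; exact WithBot.bot_lt_coe E))
      have hob : offAbs Q x i j = ⊥ := by
        rw [hdj, WithBot.add_bot] at hoff2
        rcases WithBot.add_eq_bot.mp (le_bot_iff.mp hoff2) with h | h <;> exact h
      have hzo : pencil Q x i j = 0 :=
        MAux.eq_zero_of_coeff _ (fun E => hvo E (by rw [hob]; exact WithBot.bot_lt_coe E))
      rw [hzj, hzo]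
      have h0 : pencil Q x i i * 0 - ((m : PS) - 1) ^ 2 * (0 : PS) ^ 2 = 0 := by ring
      rw [h0]; exact MAux.nonneg_zero
    rcases WithBot.ne_bot_iff_exists.mp hdi with ⟨di, hdi'⟩
    rcases WithBot.ne_bot_iff_exists.mp hdj with ⟨dj, hdj'⟩
    have hvi' : MAux.VLE (pencil Q x i i) ((di : ℝ) : WithBot ℝ) := by rw [hdi']; exact hvi
    have hvj' : MAux.VLE (pencil Q x j j) ((dj : ℝ) : WithBot ℝ) := by rw [hdj']; exact hvj
    have hci := MAux.coeff_diag_lb Q x i di hdi'.symm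
    have hcj := MAux.coeff_diag_lb Q x j dj hdj'.symm
    have hPcoeff := MAux.coeff_mul_of_vle hvi' hvj'
    have hPvle : MAux.VLE (pencil Q x i i * pencil Q x j j) (((di + dj : ℝ)) : WithBot ℝ) := by
      have h := hvi'.mul hvj'
      rwa [← WithBot.coe_add] at h
    have hsq : MAux.VLE (pencil Q x i j ^ 2) (offAbs Q x i j + offAbs Q x i j) := by
      rw [sq]; exact hvo.mul hvo
    have hSvle0 : MAux.VLE (((m : PS) - 1) ^ 2 * pencil Q x i j ^ 2)
        (offAbs Q x i j + offAbs Q x i j) := by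
      have h := hCvle.mul hsq
      rwa [WithBot.coe_zero, zero_add] at h
    have hoffle : offAbs Q x i j + offAbs Q x i j ≤ ((di + dj : ℝ) : WithBot ℝ) := by
      rw [WithBot.coe_add, hdi', hdj']
      exact hoff2
    have hSvle : MAux.VLE (((m : PS) - 1) ^ 2 * pencil Q x i j ^ 2)
        (((di + dj : ℝ)) : WithBot ℝ) := hSvle0.mono hoffle
    have hStop : (((m : PS) - 1) ^ 2 * pencil Q x i j ^ 2).coeff (OrderDual.toDual (di + dj))
        ≤ ((m : ℝ) - 1) ^ 2 * (n : ℝ) ^ 2 := by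
      cases hs : offAbs Q x i j with
      | bot =>
        have hzo : pencil Q x i j = 0 :=
          MAux.eq_zero_of_coeff _ (fun E => hvo E (by rw [hs]; exact WithBot.bot_lt_coe E))
        rw [hzo]
        have h0 : ((m : PS) - 1) ^ 2 * (0 : PS) ^ 2 = 0 := by ring
        rw [h0, HahnSeries.coeff_zero]
        positivity
      | coe s =>
        have hvo' : MAux.VLE (pencil Q x i j) ((s : ℝ) : WithBot ℝ) := by rw [hs] at hvo; exact hvo
        have hss : s + s ≤ di + dj := by
          have h := hoffle
          rw [hs, ← WithBot.coe_add] at h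
          exact_mod_cast h
        have hsq' : MAux.VLE (pencil Q x i j ^ 2) (((s + s : ℝ)) : WithBot ℝ) := by
          rw [hs, ← WithBot.coe_add] at hsq
          exact hsq
        rcases eq_or_lt_of_le hss with heq | hlt
        · have hsqco : (pencil Q x i j ^ 2).coeff (OrderDual.toDual (s + s))
              = (pencil Q x i j).coeff (OrderDual.toDual s)
                * (pencil Q x i j).coeff (OrderDual.toDual s) := by
            rw [sq]; exact MAux.coeff_mul_of_vle hvo' hvo'
          have h0 := MAux.coeff_mul_of_vle hCvle hsq'
          rw [hCcoeff, hsqco] at h0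
          have he2 : (0 : ℝ) + (s + s) = di + dj := by rw [zero_add, heq]
          rw [he2] at h0
          rw [h0]
          obtain ⟨hb1, hb2⟩ := MAux.coeff_off_bound Q hmetzler x i j hij s
          have hbb : (pencil Q x i j).coeff (OrderDual.toDual s)
              * (pencil Q x i j).coeff (OrderDual.toDual s) ≤ (n : ℝ) ^ 2 := by
            nlinarith [mul_nonneg
              (by linarith : (0 : ℝ) ≤ (pencil Q x i j).coeff (OrderDual.toDual s) + n)
              (by linarith : (0 : ℝ) ≤ (n : ℝ) - (pencil Q x i j).coeff (OrderDual.toDual s))]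
          exact mul_le_mul_of_nonneg_left hbb (sq_nonneg _)
        · have h0 : (((m : PS) - 1) ^ 2 * pencil Q x i j ^ 2).coeff (OrderDual.toDual (di + dj))
              = 0 := by
            apply hSvle0 (di + dj)
            rw [hs, ← WithBot.coe_add]
            exact_mod_cast hlt
          rw [h0]
          positivity
    apply MAux.nonneg_of_pos
    apply MAux.pos_of _ (di + dj)
    · rw [HahnSeries.coeff_sub, hPcoeff]
      have hK : (0 : ℝ) < (m : ℝ) * n - ((n : ℝ) - 1) := by nlinarith
      nlinarith [hci, hcj, hStop,
        mul_le_mul hci hcj (le_of_lt hK) (le_trans (le_of_lt hK) hci)]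
    · intro E' hE'
      have hcoe : ((di + dj : ℝ) : WithBot ℝ) < (E' : WithBot ℝ) := WithBot.coe_lt_coe.mpr hE'
      rw [HahnSeries.coeff_sub, hPvle E' hcoe, hSvle E' hcoe, sub_zero]
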